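/- arXiv:2006.05673 — 3 statements merged into one kernel-verified Lean document; each statement's English description precedes it below -/
import Mathlib

section
/- Let φ be a weight and ω ∈ ℝ^n non-resonant. If ω ∉ A_∞^φ, i.e. limsup_{k≠0} ln(|2π k·ω|^{-1})/φ(|k|) = +∞, then there exists a formal Fourier series f with sup_k |f_k| e^{rφ(|k|)} < ∞ for every r > 0 (i.e. f ∈ F_∞^φ), such that the solution g of the cohomological equation, given by g_k = (i2π k·ω)^{-1} f_k for k ≠ 0 and g_0 = 0, satisfies sup_k |g_k| e^{rφ(|k|)} = +∞ for every r < 0. -/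
open scoped ENNReal
open Filter

noncomputable section

/-- sup-norm of a lattice vector `k ∈ ℤⁿ`, `|k| = max_i |k_i|`. -/
def knorm {n : ℕ} (k : Fin n → ℤ) : ℝ :=
  ((Finset.univ.sup fun i => (k i).natAbs : ℕ) : ℝ)

/-- Euclidean pairing `k · ω`. -/
def dot {n : ℕ} (ω : Fin n → ℝ) (k : Fin n → ℤ) : ℝ := ∑ i, (k i : ℝ) * ω i

/-- Weighted sup-norm `‖f‖_r = sup_k |f_k| e^{r φ(|k|)}` (valued in `ℝ≥0∞`). -/
def fnorm {n : ℕ} (φ : ℝ → ℝ) (r : ℝ) (f : (Fin n → ℤ) → ℂ) : ℝ≥0∞ :=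
  ⨆ k : Fin n → ℤ, ENNReal.ofReal (‖f k‖ * Real.exp (r * φ (knorm k)))

/-- `γ_τ⁻¹(ω) = sup_{k ≠ 0} |2π k·ω|⁻¹ e^{-τ φ(|k|)}` (valued in `ℝ≥0∞`). -/
def gammaInv {n : ℕ} (φ : ℝ → ℝ) (τ : ℝ) (ω : Fin n → ℝ) : ℝ≥0∞ :=
  ⨆ k : {k : Fin n → ℤ // k ≠ 0},
    ENNReal.ofReal (|2 * Real.pi * dot ω (k : Fin n → ℤ)|⁻¹ *
      Real.exp (-τ * φ (knorm (k : Fin n → ℤ))))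

/-- The normalized solution of the cohomological equation:
`g_0 = 0`, `g_k = (i 2π k·ω)⁻¹ f_k` for `k ≠ 0`. -/
def sol {n : ℕ} (ω : Fin n → ℝ) (f : (Fin n → ℤ) → ℂ) : (Fin n → ℤ) → ℂ :=
  fun k => if k = 0 then 0 else (Complex.I * (2 * Real.pi * dot ω k))⁻¹ * f k

/-- A weight: continuous, vanishing at `0`, non-decreasing and non-negative on `[0,∞)`,
with `ln(1+t) = O(φ(t))`. -/
def IsWeight (φ : ℝ → ℝ) : Prop :=
  Continuous φ ∧ φ 0 = 0 ∧ MonotoneOn φ (Set.Ici 0) ∧ (∀ t, 0 ≤ t → 0 ≤ φ t) ∧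
    ∃ C > (0 : ℝ), ∃ T : ℝ, ∀ t ≥ T, Real.log (1 + t) ≤ C * φ t

end

set_option maxHeartbeats 1000000 in
/-- if `ω ∉ A_∞^φ` (i.e. `γ_τ⁻¹(ω) = ∞` for every `τ > 0`), there is
`f ∈ F_∞^φ` whose solution `g` satisfies `‖g‖_r = ∞` for every `r < 0`. -/
theorem stmt1 {n : ℕ} (φ : ℝ → ℝ) (hφ : IsWeight φ)
    (ω : Fin n → ℝ) (hnr : ∀ k : Fin n → ℤ, k ≠ 0 → dot ω k ≠ 0)
    (hω : ∀ τ : ℝ, 0 < τ → gammaInv φ τ ω = ⊤) :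
    ∃ f : (Fin n → ℤ) → ℂ, f 0 = 0 ∧
      (∀ r : ℝ, 0 < r → fnorm φ r f ≠ ⊤) ∧
      (∀ r : ℝ, r < 0 → fnorm φ r (sol ω f) = ⊤) := by
  classical
  have hφ0 : ∀ k : Fin n → ℤ, 0 ≤ φ (knorm k) := fun k =>
    hφ.2.2.2.1 _ (Nat.cast_nonneg _)
  -- choose the resonant sequence
  have hex : ∀ j : ℕ, ∃ k : Fin n → ℤ, k ≠ 0 ∧
      Real.exp j < |2 * Real.pi * dot ω k|⁻¹ *
        Real.exp (-(2 * (j : ℝ) + 2) * φ (knorm k)) := by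
    intro j
    have h := hω (2 * (j : ℝ) + 2) (by positivity)
    rw [gammaInv, iSup_eq_top] at h
    obtain ⟨⟨k, hk⟩, hlt⟩ := h (ENNReal.ofReal (Real.exp j)) ENNReal.ofReal_lt_top
    exact ⟨k, hk,
      (ENNReal.ofReal_lt_ofReal_iff_of_nonneg (Real.exp_nonneg _)).1 hlt⟩
  choose kseq hk0 hkbig using hex
  set f : (Fin n → ℤ) → ℂ := fun k =>
    if h : ∃ j, kseq j = k then
      ((Real.exp (-(Nat.find h : ℝ) * φ (knorm k)) : ℝ) : ℂ) else 0 with hf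
  have habsf : ∀ (k : Fin n → ℤ) (h : ∃ j, kseq j = k),
      ‖f k‖ = Real.exp (-(Nat.find h : ℝ) * φ (knorm k)) := by
    intro k h
    rw [hf]
    simp only [dif_pos h, Complex.norm_real, Real.norm_eq_abs, abs_of_pos (Real.exp_pos _)]
  refine ⟨f, ?_, ?_, ?_⟩
  · -- f 0 = 0
    rw [hf]
    exact dif_neg (by rintro ⟨j, hj⟩; exact hk0 j hj)
  · -- f ∈ F_∞^φ
    intro r hr
    set N := ⌈r⌉₊ with hN
    set C := (∑ j ∈ Finset.range N, Real.exp (r * φ (knorm (kseq j)))) + 1 with hC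
    have hCsum : 0 ≤ ∑ j ∈ Finset.range N, Real.exp (r * φ (knorm (kseq j))) :=
      Finset.sum_nonneg fun _ _ => Real.exp_nonneg _
    have hsup : fnorm φ r f ≤ ENNReal.ofReal C := by
      refine iSup_le fun k => ENNReal.ofReal_le_ofReal ?_
      by_cases h : ∃ j, kseq j = k
      · rw [habsf k h, ← Real.exp_add]
        set j' := Nat.find h with hj'
        by_cases hjN : j' < N
        · have hk' : kseq j' = k := Nat.find_spec h
          have h1 : -(j' : ℝ) * φ (knorm k) + r * φ (knorm k) ≤ r * φ (knorm k) := by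
            nlinarith [hφ0 k, Nat.cast_nonneg (α := ℝ) j']
          have h2 : Real.exp (r * φ (knorm k)) ≤
              ∑ j ∈ Finset.range N, Real.exp (r * φ (knorm (kseq j))) := by
            rw [← hk']
            exact Finset.single_le_sum
              (f := fun j => Real.exp (r * φ (knorm (kseq j))))
              (fun _ _ => Real.exp_nonneg _) (Finset.mem_range.2 hjN)
          calc Real.exp (-(j' : ℝ) * φ (knorm k) + r * φ (knorm k))
              ≤ Real.exp (r * φ (knorm k)) := Real.exp_le_exp.2 h1
            _ ≤ _ := h2
            _ ≤ C := by rw [hC]; linarith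
        · have hrj : r ≤ (j' : ℝ) := le_trans (Nat.le_ceil r)
            (by exact_mod_cast Nat.not_lt.1 hjN)
          have : -(j' : ℝ) * φ (knorm k) + r * φ (knorm k) ≤ 0 := by
            nlinarith [hφ0 k]
          calc Real.exp (-(j' : ℝ) * φ (knorm k) + r * φ (knorm k))
              ≤ Real.exp 0 := Real.exp_le_exp.2 this
            _ = 1 := Real.exp_zero
            _ ≤ C := by rw [hC]; linarith
      · rw [hf]
        simp only [dif_neg h, norm_zero, zero_mul]
        rw [hC]; positivity
    exact ne_top_of_le_ne_top ENNReal.ofReal_ne_top hsup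
  · -- sol blows up
    intro r hr
    rw [fnorm, iSup_eq_top]
    intro b hb
    set j := max ⌈b.toReal⌉₊ ⌈-r⌉₊ with hj
    refine ⟨kseq j, ?_⟩
    have hknz : kseq j ≠ 0 := hk0 j
    have h1 : ∃ j', kseq j' = kseq j := ⟨j, rfl⟩
    set j' := Nat.find h1 with hj'def
    have hj'leN : j' ≤ j := Nat.find_le (h := h1) rfl
    have hj'le : (j' : ℝ) ≤ (j : ℝ) := by exact_mod_cast hj'leN
    set k := kseq j with hkdef
    set E := φ (knorm k) with hE
    have hE0 : 0 ≤ E := hφ0 k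
    set A := |2 * Real.pi * dot ω k|⁻¹ with hA
    have hA0 : 0 ≤ A := by positivity
    -- compute |sol ω f k|
    have hsol : ‖sol ω f k‖ = A * Real.exp (-(j' : ℝ) * E) := by
      rw [sol, if_neg hknz, norm_mul, norm_inv, norm_mul, Complex.norm_I, one_mul]
      have : (2 * (Real.pi : ℂ) * (dot ω k : ℂ)) = ((2 * Real.pi * dot ω k : ℝ) : ℂ) := by
        push_cast; ring
      rw [this, Complex.norm_real, Real.norm_eq_abs, habsf k h1]
    -- the key numeric estimates
    have hbig := hkbig j
    rw [← hkdef, ← hE, show |2 * Real.pi * dot ω k| = A⁻¹ by rw [hA, inv_inv]] at hbig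
    have hbig' : Real.exp (j : ℝ) * Real.exp ((2 * (j : ℝ) + 2) * E) < A := by
      have hexp : (0:ℝ) < Real.exp (-(2 * (j : ℝ) + 2) * E) := Real.exp_pos _
      rw [inv_inv] at hbig
      calc Real.exp (j : ℝ) * Real.exp ((2 * (j : ℝ) + 2) * E)
          < (A * Real.exp (-(2 * (j : ℝ) + 2) * E)) * Real.exp ((2 * (j : ℝ) + 2) * E) := by
            apply mul_lt_mul_of_pos_right hbig (Real.exp_pos _)
        _ = A := by
            have hz : -(2 * (j : ℝ) + 2) * E + (2 * (j : ℝ) + 2) * E = 0 := by ring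
            rw [mul_assoc, ← Real.exp_add, hz, Real.exp_zero, mul_one]
    have hjr : -r ≤ (j : ℝ) :=
      le_trans (Nat.le_ceil _) (by exact_mod_cast le_max_right _ _)
    have hbt : b.toReal < Real.exp (j : ℝ) := by
      have h1' : b.toReal ≤ (⌈b.toReal⌉₊ : ℝ) := Nat.le_ceil _
      have h2' : ((⌈b.toReal⌉₊ : ℕ) : ℝ) ≤ (j : ℝ) := by
        exact_mod_cast le_max_left _ _
      have := Real.add_one_le_exp (j : ℝ)
      linarith
    -- now chain
    have hval : b.toReal < ‖sol ω f k‖ * Real.exp (r * E) := by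
      rw [hsol]
      have step1 : Real.exp ((r - (j:ℝ)) * E) ≤ Real.exp (-(j' : ℝ) * E) * Real.exp (r * E) := by
        rw [← Real.exp_add]
        apply Real.exp_le_exp.2
        nlinarith
      have step2 : Real.exp (j : ℝ) ≤ Real.exp (j : ℝ) * Real.exp ((2*(j:ℝ)+2) * E) * Real.exp ((r - (j:ℝ)) * E) := by
        rw [mul_assoc, ← Real.exp_add]
        have : (0:ℝ) ≤ ((2*(j:ℝ)+2) * E + (r - (j:ℝ)) * E) := by nlinarith
        nlinarith [Real.exp_pos (j:ℝ), Real.one_le_exp this]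
      have step3 : Real.exp (j : ℝ) * Real.exp ((2*(j:ℝ)+2) * E) * Real.exp ((r - (j:ℝ)) * E)
          < A * Real.exp ((r - (j:ℝ)) * E) :=
        mul_lt_mul_of_pos_right hbig' (Real.exp_pos _)
      have step4 : A * Real.exp ((r - (j:ℝ)) * E) ≤ A * (Real.exp (-(j' : ℝ) * E) * Real.exp (r * E)) :=
        mul_le_mul_of_nonneg_left step1 hA0
      calc b.toReal < Real.exp (j : ℝ) := hbt
        _ ≤ _ := step2
        _ < _ := step3
        _ ≤ _ := step4
        _ = A * Real.exp (-(j' : ℝ) * E) * Real.exp (r * E) := by ring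
    exact (ENNReal.lt_ofReal_iff_toReal_lt hb.ne).2 hval
end

section
/- For a non-resonant vector ω ∈ ℝ^n and a weight φ: ω ∈ A_∞^φ (i.e. ln(|2πk·ω|^{-1}) = O(φ(|k|))) if and only if for every f ∈ F_∞^φ with f_0 = 0, the function g defined by g_0 = 0 and g_k = (i2πk·ω)^{-1} f_k belongs to F_∞^φ. -/
open scoped ENNReal
open Filter

lemma knorm_nonneg {n : ℕ} (k : Fin n → ℤ) : 0 ≤ knorm k := by
  unfold knorm; positivity

lemma abs_sol {n : ℕ} (ω : Fin n → ℝ) (f : (Fin n → ℤ) → ℂ) (k : Fin n → ℤ)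
    (hk : k ≠ 0) :
    ‖sol ω f k‖ = |2 * Real.pi * dot ω k|⁻¹ * ‖f k‖ := by
  have hcast : (Complex.I * (2 * Real.pi * dot ω k)) =
      Complex.I * ((2 * Real.pi * dot ω k : ℝ) : ℂ) := by push_cast; ring
  rw [sol, if_neg hk, norm_mul, hcast, norm_inv, norm_mul, Complex.norm_I,
    Complex.norm_real, Real.norm_eq_abs, one_mul]

/-- `ω ∈ A_∞^φ` iff the cohomological equation can be solved in `F_∞^φ`. -/
theorem stmt3 {n : ℕ} (φ : ℝ → ℝ) (hφ : IsWeight φ)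
    (ω : Fin n → ℝ) (hnr : ∀ k : Fin n → ℤ, k ≠ 0 → dot ω k ≠ 0) :
    (∃ τ : ℝ, 0 < τ ∧ gammaInv φ τ ω ≠ ⊤) ↔
      (∀ f : (Fin n → ℤ) → ℂ, f 0 = 0 →
        (∀ r : ℝ, 0 < r → fnorm φ r f ≠ ⊤) →
        (∀ r : ℝ, 0 < r → fnorm φ r (sol ω f) ≠ ⊤)) := by
  have hφ0 : ∀ k : Fin n → ℤ, 0 ≤ φ (knorm k) := fun k => hφ.2.2.2.1 _ (knorm_nonneg k)
  constructor
  · rintro ⟨τ, hτ, hγ⟩ f hf0 hff r hr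
    have key : fnorm φ r (sol ω f) ≤ gammaInv φ τ ω * fnorm φ (r + τ) f := by
      apply iSup_le; intro k
      by_cases hk : k = 0
      · simp [sol, hk]
      · have hexp : Real.exp (-τ * φ (knorm k)) * Real.exp ((r + τ) * φ (knorm k)) =
            Real.exp (r * φ (knorm k)) := by
          rw [← Real.exp_add]; ring_nf
        have heq : ‖sol ω f k‖ * Real.exp (r * φ (knorm k)) =
            (|2 * Real.pi * dot ω k|⁻¹ * Real.exp (-τ * φ (knorm k))) *
              (‖f k‖ * Real.exp ((r + τ) * φ (knorm k))) := by
          rw [abs_sol ω f k hk, ← hexp]; ring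
        rw [heq, ENNReal.ofReal_mul (by positivity)]
        exact mul_le_mul'
          (le_iSup (fun j : {j : Fin n → ℤ // j ≠ 0} =>
            ENNReal.ofReal (|2 * Real.pi * dot ω (j : Fin n → ℤ)|⁻¹ *
              Real.exp (-τ * φ (knorm (j : Fin n → ℤ))))) ⟨k, hk⟩)
          (le_iSup (fun j => ENNReal.ofReal (‖f j‖ *
            Real.exp ((r + τ) * φ (knorm j)))) k)
    exact ne_top_of_le_ne_top (ENNReal.mul_ne_top hγ (hff (r + τ) (by positivity))) key
  · intro hsolve
    classical
    by_contra hA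
    push_neg at hA
    have hbig : ∀ m : ℕ, ∃ k : Fin n → ℤ, k ≠ 0 ∧
        Real.exp m < |2 * Real.pi * dot ω k|⁻¹ *
          Real.exp (-((m : ℝ) + 1) * φ (knorm k)) := by
      intro m
      have h := hA ((m : ℝ) + 1) (by positivity)
      have hlt : ENNReal.ofReal (Real.exp m) < gammaInv φ ((m : ℝ) + 1) ω := by
        rw [h]; exact ENNReal.ofReal_lt_top
      rw [gammaInv, lt_iSup_iff] at hlt
      obtain ⟨⟨k, hk⟩, hlt⟩ := hlt
      exact ⟨k, hk, (ENNReal.ofReal_lt_ofReal_iff_of_nonneg (Real.exp_pos _).le).mp hlt⟩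
    choose K hK0 hKbig using hbig
    set f : (Fin n → ℤ) → ℂ := fun k =>
      if h : ∃ m, K m = k then
        ((Real.exp (-((Nat.find h : ℝ) + 1) * φ (knorm k)) : ℝ) : ℂ) else 0 with hfdef
    have hfval : ∀ k (h : ∃ m, K m = k),
        f k = ((Real.exp (-((Nat.find h : ℝ) + 1) * φ (knorm k)) : ℝ) : ℂ) := by
      intro k h; rw [hfdef]; exact dif_pos h
    have hf0 : f 0 = 0 := by
      rw [hfdef]
      refine dif_neg ?_
      rintro ⟨m, hm⟩; exact hK0 m hm
    have hfF : ∀ r : ℝ, 0 < r → fnorm φ r f ≠ ⊤ := by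
      intro r hr
      set N : ℕ := ⌈r⌉₊ with hN
      set C : ℝ≥0∞ := ((Finset.range N).sup fun m =>
        ENNReal.ofReal (Real.exp (r * φ (knorm (K m))))) ⊔ 1 with hC
      have hle : fnorm φ r f ≤ C := by
        apply iSup_le; intro k
        by_cases h : ∃ m, K m = k
        · rw [hfval k h, Complex.norm_real, Real.norm_eq_abs, abs_of_pos (Real.exp_pos _), ← Real.exp_add]
          set m₀ : ℕ := Nat.find h with hm₀
          by_cases hm : m₀ < N
          · refine le_trans ?_ (le_sup_left.trans_eq hC.symm)
            refine le_trans ?_ (Finset.le_sup (Finset.mem_range.mpr hm))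
            apply ENNReal.ofReal_le_ofReal
            rw [(Nat.find_spec h : K m₀ = k)]
            apply Real.exp_le_exp.mpr
            nlinarith [hφ0 k, (Nat.find_spec h : K m₀ = k) ▸ hφ0 k]
          · refine le_trans ?_ (le_sup_right.trans_eq hC.symm)
            rw [← ENNReal.ofReal_one]
            apply ENNReal.ofReal_le_ofReal
            have hrN : r ≤ (m₀ : ℝ) + 1 := by
              have h1 : r ≤ (N : ℝ) := Nat.le_ceil r
              have h2 : (N : ℝ) ≤ (m₀ : ℝ) := by exact_mod_cast Nat.le_of_not_lt hm
              linarith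
            have hx : -((m₀ : ℝ) + 1) * φ (knorm k) + r * φ (knorm k) ≤ 0 := by
              nlinarith [hφ0 k]
            calc Real.exp (-((m₀ : ℝ) + 1) * φ (knorm k) + r * φ (knorm k))
                ≤ Real.exp 0 := Real.exp_le_exp.mpr hx
              _ = 1 := Real.exp_zero
        · rw [hfdef]; simp only [dif_neg h]
          simp
      have hCt : C < ⊤ := by
        rw [hC]
        apply sup_lt_iff.mpr
        constructor
        · exact (Finset.sup_lt_iff (by simp : (⊥ : ℝ≥0∞) < ⊤)).mpr
            (fun m _ => ENNReal.ofReal_lt_top)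
        · exact ENNReal.one_lt_top
      exact ne_top_of_le_ne_top hCt.ne hle
    have hT := hsolve f hf0 hfF 1 one_pos
    -- derive contradiction: fnorm φ 1 (sol ω f) is infinite
    have hterm : ∀ m : ℕ, Real.exp m ≤ (fnorm φ 1 (sol ω f)).toReal := by
      intro m
      have hex : ∃ m', K m' = K m := ⟨m, rfl⟩
      set m₀ : ℕ := Nat.find hex with hm₀
      have hm₀le : m₀ ≤ m := Nat.find_le rfl
      set k := K m with hk
      have hval : ‖sol ω f k‖ * Real.exp (1 * φ (knorm k)) =
          |2 * Real.pi * dot ω k|⁻¹ *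
            Real.exp ((-((m₀ : ℝ) + 1) + 1) * φ (knorm k)) := by
        rw [abs_sol ω f k (hK0 m), hfval k hex, Complex.norm_real, Real.norm_eq_abs,
          abs_of_pos (Real.exp_pos _), mul_assoc, ← Real.exp_add]
        ring_nf
        rw [mul_comm (φ (knorm k)) (m₀ : ℝ)]
      have hge : Real.exp m ≤ ‖sol ω f k‖ * Real.exp (1 * φ (knorm k)) := by
        rw [hval]
        refine le_trans (hKbig m).le ?_
        apply mul_le_mul_of_nonneg_left _ (by positivity)
        apply Real.exp_le_exp.mpr
        have := hφ0 k
        have hm' : (m₀ : ℝ) ≤ (m : ℝ) := by exact_mod_cast hm₀le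
        nlinarith
      have hsup : ENNReal.ofReal (‖sol ω f k‖ * Real.exp (1 * φ (knorm k)))
          ≤ fnorm φ 1 (sol ω f) :=
        le_iSup (fun j => ENNReal.ofReal (‖sol ω f j‖ *
          Real.exp (1 * φ (knorm j)))) k
      have := (ENNReal.ofReal_le_iff_le_toReal hT).mp hsup
      linarith
    obtain ⟨m, hm⟩ := exists_nat_gt (fnorm φ 1 (sol ω f)).toReal
    have h1 := hterm m
    have h2 := Real.add_one_le_exp (m : ℝ)
    linarith
end

section
/- Let 0 < a < 1, τ₀ > 0 and let Γ(σ) := sup_{t≥0} (1+t) e^{τ₀ t^a/a − σt} for σ > 0. Then Γ(σ) < ∞ for all σ > 0, and for any τ > τ₀ there exists σ* > 0 such that Γ(σ) ≤ exp(τ φ_b(τ/σ)) for all 0 < σ ≤ σ*, where b = a/(1-a) and φ_b(s) = s^b/b. -/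
/-- Young-type inequality: `τ t^a/a − σ t ≤ τ φ_b(τ/σ)` with `b = a/(1-a)`. -/
lemma stmt16_young (a b τ σ t : ℝ) (ha0 : 0 < a) (ha1 : a < 1) (hb : b = a / (1 - a))
    (hτ : 0 < τ) (hσ : 0 < σ) (ht : 0 ≤ t) :
    τ * (t ^ a / a) - σ * t ≤ τ * ((τ / σ) ^ b / b) := by
  have h1a : 0 < 1 - a := by linarith
  have hbpos : 0 < b := by rw [hb]; positivity
  have hrhs : 0 ≤ τ * ((τ / σ) ^ b / b) := by positivity
  rcases eq_or_lt_of_le ht with h | h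
  · rw [← h]
    simpa [Real.zero_rpow ha0.ne'] using hrhs
  · set p₁ := σ * t / a with hp₁def
    set p₂ := (τ / a) * (τ / σ) ^ b with hp₂def
    have hp₁ : 0 ≤ p₁ := by positivity
    have hp₂ : 0 ≤ p₂ := by positivity
    have hgm := Real.geom_mean_le_arith_mean2_weighted ha0.le h1a.le hp₁ hp₂ (by ring)
    have hba : b * (1 - a) = a := by rw [hb]; field_simp
    have e1 : p₁ ^ a = σ ^ a * t ^ a / a ^ a := by
      rw [hp₁def, Real.div_rpow (by positivity) ha0.le, Real.mul_rpow hσ.le h.le]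
    have e2 : p₂ ^ (1 - a) = τ ^ (1 - a) / a ^ (1 - a) * (τ ^ a / σ ^ a) := by
      rw [hp₂def, Real.mul_rpow (by positivity) (by positivity),
        Real.div_rpow hτ.le ha0.le, ← Real.rpow_mul (by positivity), hba,
        Real.div_rpow hτ.le hσ.le]
    have hτsum : τ ^ (1 - a) * τ ^ a = τ := by
      rw [← Real.rpow_add hτ, show (1 - a) + a = 1 by ring, Real.rpow_one]
    have hasum : a ^ a * a ^ (1 - a) = a := by
      rw [← Real.rpow_add ha0, show a + (1 - a) = 1 by ring, Real.rpow_one]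
    have hσa : (0:ℝ) < σ ^ a := Real.rpow_pos_of_pos hσ a
    have haa : (0:ℝ) < a ^ a := Real.rpow_pos_of_pos ha0 a
    have ha1a : (0:ℝ) < a ^ (1 - a) := Real.rpow_pos_of_pos ha0 (1 - a)
    have hkey : p₁ ^ a * p₂ ^ (1 - a) = τ * (t ^ a / a) := by
      rw [e1, e2]
      rw [show σ ^ a * t ^ a / a ^ a * (τ ^ (1 - a) / a ^ (1 - a) * (τ ^ a / σ ^ a))
          = (τ ^ (1 - a) * τ ^ a) * t ^ a * σ ^ a / ((a ^ a * a ^ (1 - a)) * σ ^ a) by ring,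
        hτsum, hasum, mul_div_mul_right _ _ hσa.ne']
      ring
    have harith : a * p₁ + (1 - a) * p₂ = σ * t + τ * ((τ / σ) ^ b / b) := by
      rw [hp₁def, hp₂def, hb]
      field_simp
    rw [hkey, harith] at hgm
    linarith

/-- Logarithmic absorption: `log(1+t) ≤ δ t^a/a + C`. -/
lemma stmt16_logbound (a δ : ℝ) (ha0 : 0 < a) (hδ : 0 < δ) :
    ∃ C : ℝ, 0 ≤ C ∧ ∀ t : ℝ, 0 ≤ t → Real.log (1 + t) ≤ δ * (t ^ a / a) + C := by
  have h2 : (0:ℝ) ≤ Real.log 2 := Real.log_nonneg (by norm_num)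
  refine ⟨Real.log 2 + max 0 (Real.log (1 / δ)) / a,
    by positivity, fun t ht => ?_⟩
  have hta : (0:ℝ) ≤ t ^ a := Real.rpow_nonneg ht a
  have hmax : 0 ≤ max 0 (Real.log (1 / δ)) := le_max_left _ _
  rcases le_or_gt t 1 with h1 | h1
  · have hlog : Real.log (1 + t) ≤ Real.log 2 :=
      Real.log_le_log (by linarith) (by linarith)
    have : 0 ≤ δ * (t ^ a / a) := by positivity
    have : 0 ≤ max 0 (Real.log (1 / δ)) / a := by positivity
    linarith
  · have ht0 : 0 < t := by linarith
    have hlog1 : Real.log (1 + t) ≤ Real.log 2 + Real.log t := by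
      rw [← Real.log_mul (by norm_num) ht0.ne']
      exact Real.log_le_log (by linarith) (by linarith)
    have hlogt : Real.log t = Real.log (t ^ a) / a := by
      rw [Real.log_rpow ht0]
      field_simp
    have hx : Real.log (t ^ a) ≤ δ * t ^ a + Real.log (1 / δ) := by
      have h0 : 0 < δ * t ^ a := by positivity
      have hle := Real.log_le_sub_one_of_pos h0
      rw [Real.log_mul hδ.ne' (by positivity)] at hle
      have hinv : Real.log (1 / δ) = -Real.log δ := by
        rw [one_div, Real.log_inv]
      linarith
    have hx2 : Real.log (t ^ a) ≤ δ * t ^ a + max 0 (Real.log (1 / δ)) :=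
      le_trans hx (by have := le_max_right 0 (Real.log (1 / δ)); linarith)
    have hdiv : Real.log (t ^ a) / a ≤ (δ * t ^ a + max 0 (Real.log (1 / δ))) / a := by
      gcongr
    have : Real.log t ≤ δ * (t ^ a / a) + max 0 (Real.log (1 / δ)) / a := by
      rw [hlogt]
      calc Real.log (t ^ a) / a ≤ (δ * t ^ a + max 0 (Real.log (1 / δ))) / a := hdiv
        _ = δ * (t ^ a / a) + max 0 (Real.log (1 / δ)) / a := by ring
    linarith

/-- `Γ(σ) = sup_{t≥0} (1+t) e^{τ₀ t^a/a − σt}` is finite for all `σ > 0`,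
and for any `τ > τ₀` there is `σ* > 0` with `Γ(σ) ≤ e^{τ φ_b(τ/σ)}` for `0 < σ ≤ σ*`,
where `b = a/(1-a)` and `φ_b(s) = s^b/b`. -/
theorem stmt16 (a τ₀ b : ℝ) (ha0 : 0 < a) (ha1 : a < 1) (hτ₀ : 0 < τ₀)
    (hb : b = a / (1 - a)) :
    (∀ σ : ℝ, 0 < σ →
      BddAbove {y : ℝ | ∃ t : ℝ, 0 ≤ t ∧ y = (1 + t) * Real.exp (τ₀ * (t ^ a / a) - σ * t)}) ∧
    (∀ τ : ℝ, τ₀ < τ → ∃ σs : ℝ, 0 < σs ∧ ∀ σ : ℝ, 0 < σ → σ ≤ σs →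
      sSup {y : ℝ | ∃ t : ℝ, 0 ≤ t ∧ y = (1 + t) * Real.exp (τ₀ * (t ^ a / a) - σ * t)}
        ≤ Real.exp (τ * ((τ / σ) ^ b / b))) := by
  have h1a : 0 < 1 - a := by linarith
  have hbpos : 0 < b := by rw [hb]; positivity
  constructor
  · intro σ hσ
    obtain ⟨C, hC0, hC⟩ := stmt16_logbound a 1 ha0 one_pos
    refine ⟨Real.exp (C + (τ₀ + 1) * (((τ₀ + 1) / σ) ^ b / b)), fun y hy => ?_⟩
    obtain ⟨t, ht, rfl⟩ := hy
    have h1t : (0:ℝ) < 1 + t := by linarith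
    rw [← Real.exp_log h1t, ← Real.exp_add]
    apply Real.exp_le_exp.2
    have h2 := stmt16_young a b (τ₀ + 1) σ t ha0 ha1 hb (by linarith) hσ ht
    have h3 := hC t ht
    have e : (τ₀ + 1) * (t ^ a / a) = τ₀ * (t ^ a / a) + 1 * (t ^ a / a) := by ring
    rw [e] at h2
    linarith
  · intro τ hτ
    set τ' := (τ₀ + τ) / 2 with hτ'def
    have hτ'0 : 0 < τ' := by rw [hτ'def]; linarith
    have hτ'τ : τ' < τ := by rw [hτ'def]; linarith
    have hδ : 0 < τ' - τ₀ := by rw [hτ'def]; linarith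
    obtain ⟨C, hC0, hC⟩ := stmt16_logbound a (τ' - τ₀) ha0 hδ
    have hτb : (0:ℝ) < τ ^ b := Real.rpow_pos_of_pos (by linarith) b
    have hτ'b : (0:ℝ) < τ' ^ b := Real.rpow_pos_of_pos hτ'0 b
    have hbb : τ' ^ b < τ ^ b := Real.rpow_lt_rpow hτ'0.le hτ'τ hbpos
    have hD : 0 < τ * τ ^ b - τ' * τ' ^ b := by nlinarith
    set D := (τ * τ ^ b - τ' * τ' ^ b) / b with hDdef
    have hDpos : 0 < D := by rw [hDdef]; positivity
    set C' := C + 1 with hC'def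
    have hC'pos : 0 < C' := by rw [hC'def]; linarith
    refine ⟨(D / C') ^ b⁻¹, by positivity, fun σ hσ hσs => ?_⟩
    have hσb : (0:ℝ) < σ ^ b := Real.rpow_pos_of_pos hσ b
    have hσble : σ ^ b ≤ D / C' := by
      calc σ ^ b ≤ ((D / C') ^ b⁻¹) ^ b := Real.rpow_le_rpow hσ.le hσs hbpos.le
        _ = D / C' := Real.rpow_inv_rpow (by positivity) hbpos.ne'
    have hkey : C * (b * σ ^ b) ≤ τ * τ ^ b - τ' * τ' ^ b := by
      have h1 : σ ^ b * C' ≤ D := by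
        rw [← le_div_iff₀ hC'pos]; exact hσble
      have h2 : D * b = τ * τ ^ b - τ' * τ' ^ b := by
        rw [hDdef]; field_simp
      have h3 : C * (b * σ ^ b) ≤ C' * (b * σ ^ b) :=
        mul_le_mul_of_nonneg_right (by rw [hC'def]; linarith) (by positivity)
      have h4 := mul_le_mul_of_nonneg_right h1 hbpos.le
      have h5 : C' * (b * σ ^ b) = σ ^ b * C' * b := by ring
      linarith
    apply Real.sSup_le _ (Real.exp_pos _).le
    intro y hy
    obtain ⟨t, ht, rfl⟩ := hy
    have h1t : (0:ℝ) < 1 + t := by linarith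
    rw [← Real.exp_log h1t, ← Real.exp_add]
    apply Real.exp_le_exp.2
    have h2 := stmt16_young a b τ' σ t ha0 ha1 hb hτ'0 hσ ht
    have h3 := hC t ht
    have ediv1 : (τ' / σ) ^ b = τ' ^ b / σ ^ b := Real.div_rpow hτ'0.le hσ.le b
    have ediv2 : (τ / σ) ^ b = τ ^ b / σ ^ b := Real.div_rpow (by linarith) hσ.le b
    rw [ediv1] at h2
    rw [ediv2]
    have hfin : C + τ' * (τ' ^ b / σ ^ b / b) ≤ τ * (τ ^ b / σ ^ b / b) := by
      rw [← sub_nonneg]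
      have hrw : τ * (τ ^ b / σ ^ b / b) - (C + τ' * (τ' ^ b / σ ^ b / b)) =
          ((τ * τ ^ b - τ' * τ' ^ b) - C * (b * σ ^ b)) / (b * σ ^ b) := by
        field_simp
        ring
      rw [hrw]
      apply div_nonneg (by linarith) (by positivity)
    have e : (τ' - τ₀) * (t ^ a / a) + τ₀ * (t ^ a / a) = τ' * (t ^ a / a) := by ring
    linarith [h2, h3, hfin]
end
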